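/- The normalizer of SO₃ in GL₃ over an algebraically closed field of characteristic 0 is GO₃, the group of orthogonal similitudes: every g ∈ GL₃(k) with g·SO₃(k)·g⁻¹ = SO₃(k) satisfies gᵀg = λ·I for some nonzero scalar λ. -/

import Mathlib

open Matrix

/-- The normalizer of `SO₃` in `GL₃` over an algebraically closed field of characteristic 0
is `GO₃`: any `g ∈ GL₃(k)` normalizing `SO₃(k)` satisfies `gᵀ g = λ • 1` for some `λ ≠ 0`. -/
theorem normalizer_SO3_eq_GO3 (k : Type*) [Field k] [IsAlgClosed k] [CharZero k]
    (g : Matrix.GeneralLinearGroup (Fin 3) k)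
    (hnorm : ∀ A : Matrix (Fin 3) (Fin 3) k,
      (Aᵀ * A = 1 ∧ A.det = 1) ↔
      (((g : Matrix (Fin 3) (Fin 3) k) * A * ((g⁻¹ : Matrix.GeneralLinearGroup (Fin 3) k) :
          Matrix (Fin 3) (Fin 3) k))ᵀ *
        ((g : Matrix (Fin 3) (Fin 3) k) * A * ((g⁻¹ : Matrix.GeneralLinearGroup (Fin 3) k) :
          Matrix (Fin 3) (Fin 3) k)) = 1 ∧
       ((g : Matrix (Fin 3) (Fin 3) k) * A * ((g⁻¹ : Matrix.GeneralLinearGroup (Fin 3) k) :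
          Matrix (Fin 3) (Fin 3) k)).det = 1)) :
    ∃ lam : k, lam ≠ 0 ∧
      (g : Matrix (Fin 3) (Fin 3) k)ᵀ * (g : Matrix (Fin 3) (Fin 3) k) =
        lam • (1 : Matrix (Fin 3) (Fin 3) k) := by
  set G : Matrix (Fin 3) (Fin 3) k := (g : Matrix (Fin 3) (Fin 3) k) with hGdef
  set Gi : Matrix (Fin 3) (Fin 3) k :=
    ((g⁻¹ : Matrix.GeneralLinearGroup (Fin 3) k) : Matrix (Fin 3) (Fin 3) k) with hGidef
  have hGiG : Gi * G = 1 := by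
    rw [hGdef, hGidef]
    exact Units.inv_mul g
  set m : Matrix (Fin 3) (Fin 3) k := Gᵀ * G with hm
  have key : ∀ R : Matrix (Fin 3) (Fin 3) k, Rᵀ * R = 1 → R.det = 1 →
      Rᵀ * m * R = m := by
    intro R h1 h2
    obtain ⟨E, -⟩ := (hnorm R).mp ⟨h1, h2⟩
    have E' : Giᵀ * (Rᵀ * m * R) * Gi = 1 := by
      rw [hm]
      calc Giᵀ * (Rᵀ * (Gᵀ * G) * R) * Gi
          = (G * R * Gi)ᵀ * (G * R * Gi) := by
            simp only [transpose_mul]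
            noncomm_ring
        _ = 1 := E
    have hT : Gᵀ * Giᵀ = 1 := by
      rw [← transpose_mul, hGiG, transpose_one]
    calc Rᵀ * m * R = (Gᵀ * Giᵀ) * (Rᵀ * m * R) * (Gi * G) := by
          rw [hT, hGiG, one_mul, mul_one]
      _ = Gᵀ * (Giᵀ * (Rᵀ * m * R) * Gi) * G := by noncomm_ring
      _ = m := by rw [E', mul_one, hm]
  have hsym : mᵀ = m := by rw [hm, transpose_mul, transpose_transpose]
  set Rz : Matrix (Fin 3) (Fin 3) k := !![0,-1,0; 1,0,0; 0,0,1] with hRz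
  set Rx : Matrix (Fin 3) (Fin 3) k := !![1,0,0; 0,0,-1; 0,1,0] with hRx
  have hRzT : Rzᵀ = !![0,1,0; -1,0,0; 0,0,1] := by
    rw [hRz]; ext i j; fin_cases i <;> fin_cases j <;> rfl
  have hRxT : Rxᵀ = !![1,0,0; 0,0,1; 0,-1,0] := by
    rw [hRx]; ext i j; fin_cases i <;> fin_cases j <;> rfl
  have e1 : Rzᵀ * m * Rz = m := by
    apply key
    · rw [hRzT, hRz]
      ext i j
      fin_cases i <;> fin_cases j <;>
        simp [Matrix.mul_apply, Fin.sum_univ_three, Matrix.one_apply, Matrix.vecHead, Matrix.vecTail]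
    · rw [hRz, Matrix.det_fin_three]; simp
  have e2 : Rxᵀ * m * Rx = m := by
    apply key
    · rw [hRxT, hRx]
      ext i j
      fin_cases i <;> fin_cases j <;>
        simp [Matrix.mul_apply, Fin.sum_univ_three, Matrix.one_apply, Matrix.vecHead, Matrix.vecTail]
    · rw [hRx, Matrix.det_fin_three]; simp
  rw [hRzT, hRz] at e1
  rw [hRxT, hRx] at e2
  have s01 : m 1 0 = m 0 1 := by
    have := congrFun (congrFun hsym 1) 0; simpa using this.symm
  have s02 : m 2 0 = m 0 2 := by
    have := congrFun (congrFun hsym 2) 0; simpa using this.symm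
  have s12 : m 2 1 = m 1 2 := by
    have := congrFun (congrFun hsym 2) 1; simpa using this.symm
  have z00 := congrFun (congrFun e1 0) 0
  have z01 := congrFun (congrFun e1 0) 1
  have z02 := congrFun (congrFun e1 0) 2
  have z12 := congrFun (congrFun e1 1) 2
  have x11 := congrFun (congrFun e2 1) 1
  have x01 := congrFun (congrFun e2 0) 1
  simp [Matrix.mul_apply, Matrix.vecMul, dotProduct, Fin.sum_univ_three,
    Matrix.vecHead, Matrix.vecTail] at z00 z01 z02 z12 x11 x01
  have h01 : m 0 1 = 0 := by linear_combination (-z01 - s01) / 2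
  have h02 : m 0 2 = 0 := by linear_combination (-z02 - z12) / 2
  have h12 : m 1 2 = 0 := by linear_combination z02 + h02
  have h10 : m 1 0 = 0 := by linear_combination s01 + h01
  have h20 : m 2 0 = 0 := by linear_combination s02 + h02
  have h21 : m 2 1 = 0 := by linear_combination s12 + h12
  have h11 : m 1 1 = m 0 0 := z00
  have h22 : m 2 2 = m 0 0 := by linear_combination x11 + z00
  refine ⟨m 0 0, ?_, ?_⟩
  · intro h0
    have hdet : m.det ≠ 0 := by
      rw [hm, det_mul, det_transpose]
      have hG : G.det ≠ 0 :=
        ((Matrix.isUnit_iff_isUnit_det _).mp (Units.isUnit g)).ne_zero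
      exact mul_ne_zero hG hG
    apply hdet
    rw [Matrix.det_fin_three, h11, h22, h01, h02, h12, h10, h20, h21, h0]
    ring
  · ext i j
    fin_cases i <;> fin_cases j <;>
      simp [Matrix.one_apply, h11, h22, h01, h02, h12, h10, h20, h21]
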